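/- Let d, w_1, w_2, w_3 be positive integers with gcd(w_i, w_j) dividing d for all i < j, and set u_i = d/gcd(d,w_i), v_i = w_i/gcd(d,w_i). Then (u_1*u_2*u_3)/(v_1*v_2*v_3*lcm(u_1,u_2,u_3)) = d^2 * gcd(w_1,w_2,w_3)/(w_1*w_2*w_3); equivalently u_1*u_2*u_3*w_1*w_2*w_3 = d^2*gcd(w_1,w_2,w_3)*v_1*v_2*v_3*lcm(u_1,u_2,u_3). -/

import Mathlib

lemma gcd_div_div (d a b : ℕ) (ha : a ∣ d) (hb : b ∣ d) :
    Nat.gcd (d / a) (d / b) = d / Nat.lcm a b := by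
  apply Nat.dvd_antisymm
  · rw [Nat.dvd_div_iff_mul_dvd (Nat.lcm_dvd ha hb)]
    have h1 : a * Nat.gcd (d / a) (d / b) ∣ d :=
      (Nat.dvd_div_iff_mul_dvd ha).mp (Nat.gcd_dvd_left _ _)
    have h2 : b * Nat.gcd (d / a) (d / b) ∣ d :=
      (Nat.dvd_div_iff_mul_dvd hb).mp (Nat.gcd_dvd_right _ _)
    have := Nat.lcm_dvd h1 h2
    rwa [Nat.lcm_mul_right] at this
  · refine Nat.dvd_gcd ?_ ?_
    · rw [Nat.dvd_div_iff_mul_dvd ha]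
      calc a * (d / Nat.lcm a b) ∣ Nat.lcm a b * (d / Nat.lcm a b) :=
            Nat.mul_dvd_mul_right (Nat.dvd_lcm_left a b) _
        _ = d := Nat.mul_div_cancel' (Nat.lcm_dvd ha hb)
    · rw [Nat.dvd_div_iff_mul_dvd hb]
      calc b * (d / Nat.lcm a b) ∣ Nat.lcm a b * (d / Nat.lcm a b) :=
            Nat.mul_dvd_mul_right (Nat.dvd_lcm_right a b) _
        _ = d := Nat.mul_div_cancel' (Nat.lcm_dvd ha hb)

lemma lcm_div_mul_gcd (d a b : ℕ) (hd : 0 < d) (ha : a ∣ d) (hb : b ∣ d) :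
    Nat.lcm (d / a) (d / b) * Nat.gcd a b = d := by
  have ha0 : 0 < a := Nat.pos_of_dvd_of_pos ha hd
  have hb0 : 0 < b := Nat.pos_of_dvd_of_pos hb hd
  have hA : Nat.gcd (d / a) (d / b) = d / Nat.lcm a b := gcd_div_div d a b ha hb
  have hlcm : Nat.lcm a b ∣ d := Nat.lcm_dvd ha hb
  have key : ((Nat.lcm (d / a) (d / b) : ℚ)) * Nat.gcd a b = d := by
    have h1 : (Nat.gcd (d / a) (d / b) : ℚ) * Nat.lcm (d / a) (d / b)
        = ((d / a : ℕ) : ℚ) * ((d / b : ℕ) : ℚ) := by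
      exact_mod_cast congrArg (Nat.cast : ℕ → ℚ) (Nat.gcd_mul_lcm (d / a) (d / b))
    have h2 : (Nat.gcd a b : ℚ) * Nat.lcm a b = (a : ℚ) * b := by
      exact_mod_cast congrArg (Nat.cast : ℕ → ℚ) (Nat.gcd_mul_lcm a b)
    rw [hA] at h1
    rw [Nat.cast_div ha (by exact_mod_cast ha0.ne'),
        Nat.cast_div hb (by exact_mod_cast hb0.ne'),
        Nat.cast_div hlcm (by exact_mod_cast (Nat.lcm_pos ha0 hb0).ne')] at h1
    have hlcm0 : (Nat.lcm a b : ℚ) ≠ 0 := by exact_mod_cast (Nat.lcm_pos ha0 hb0).ne'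
    have hd0 : (d : ℚ) ≠ 0 := by exact_mod_cast hd.ne'
    have haq : (a : ℚ) ≠ 0 := by exact_mod_cast ha0.ne'
    have hbq : (b : ℚ) ≠ 0 := by exact_mod_cast hb0.ne'
    field_simp at h1
    have h3 : (Nat.lcm (d / a) (d / b) : ℚ) * Nat.gcd a b * ((d : ℚ) * Nat.lcm a b)
        = (d : ℚ) * ((d : ℚ) * Nat.lcm a b) := by
      calc (Nat.lcm (d / a) (d / b) : ℚ) * Nat.gcd a b * ((d : ℚ) * Nat.lcm a b)
          = (d : ℚ) * Nat.lcm (d / a) (d / b) * ((Nat.gcd a b : ℚ) * Nat.lcm a b) := by ring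
        _ = (d : ℚ) * Nat.lcm (d / a) (d / b) * ((a : ℚ) * b) := by rw [h2]
        _ = (d : ℚ) * ((d : ℚ) * Nat.lcm a b) := by rw [← h1]; ring
    exact mul_right_cancel₀ (by positivity) h3
  exact_mod_cast key

theorem triple_fractional_weight_identity (d w1 w2 w3 : ℕ) (hd : 0 < d)
    (hw1 : 0 < w1) (hw2 : 0 < w2) (hw3 : 0 < w3)
    (h12 : Nat.gcd w1 w2 ∣ d) (h13 : Nat.gcd w1 w3 ∣ d) (h23 : Nat.gcd w2 w3 ∣ d)
    (u1 u2 u3 v1 v2 v3 : ℕ)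
    (hu1 : u1 = d / Nat.gcd d w1) (hu2 : u2 = d / Nat.gcd d w2) (hu3 : u3 = d / Nat.gcd d w3)
    (hv1 : v1 = w1 / Nat.gcd d w1) (hv2 : v2 = w2 / Nat.gcd d w2) (hv3 : v3 = w3 / Nat.gcd d w3) :
    ((u1 : ℚ) * u2 * u3) / ((v1 : ℚ) * v2 * v3 * Nat.lcm (Nat.lcm u1 u2) u3)
      = (d : ℚ) ^ 2 * Nat.gcd (Nat.gcd w1 w2) w3 / ((w1 : ℚ) * w2 * w3) ∧
    u1 * u2 * u3 * (w1 * w2 * w3)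
      = d ^ 2 * Nat.gcd (Nat.gcd w1 w2) w3 * (v1 * v2 * v3) * Nat.lcm (Nat.lcm u1 u2) u3 := by
  set g1 := Nat.gcd d w1 with hg1
  set g2 := Nat.gcd d w2 with hg2
  set g3 := Nat.gcd d w3 with hg3
  have hg1d : g1 ∣ d := Nat.gcd_dvd_left d w1
  have hg2d : g2 ∣ d := Nat.gcd_dvd_left d w2
  have hg3d : g3 ∣ d := Nat.gcd_dvd_left d w3
  have hg1w : g1 ∣ w1 := Nat.gcd_dvd_right d w1
  have hg2w : g2 ∣ w2 := Nat.gcd_dvd_right d w2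
  have hg3w : g3 ∣ w3 := Nat.gcd_dvd_right d w3
  -- gcd g1 g2 = gcd w1 w2
  have hgg : Nat.gcd g1 g2 = Nat.gcd w1 w2 := by
    apply Nat.dvd_antisymm
    · exact Nat.dvd_gcd ((Nat.gcd_dvd_left g1 g2).trans hg1w)
        ((Nat.gcd_dvd_right g1 g2).trans hg2w)
    · exact Nat.dvd_gcd (Nat.dvd_gcd h12 (Nat.gcd_dvd_left w1 w2))
        (Nat.dvd_gcd h12 (Nat.gcd_dvd_right w1 w2))
  have hG12pos : 0 < Nat.gcd w1 w2 := Nat.gcd_pos_of_pos_left w2 hw1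
  have hlcm12 : Nat.lcm u1 u2 * Nat.gcd w1 w2 = d := by
    rw [hu1, hu2, ← hgg]; exact lcm_div_mul_gcd d g1 g2 hd hg1d hg2d
  have hlcm12' : Nat.lcm u1 u2 = d / Nat.gcd w1 w2 :=
    (Nat.div_eq_of_eq_mul_left hG12pos hlcm12.symm).symm
  -- gcd (gcd w1 w2) g3 = gcd (gcd w1 w2) w3
  have hgg2 : Nat.gcd (Nat.gcd w1 w2) g3 = Nat.gcd (Nat.gcd w1 w2) w3 := by
    rw [hg3, ← Nat.gcd_assoc, Nat.gcd_eq_left h12]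
  have hLG : Nat.lcm (Nat.lcm u1 u2) u3 * Nat.gcd (Nat.gcd w1 w2) w3 = d := by
    rw [hlcm12', hu3, ← hgg2]
    exact lcm_div_mul_gcd d (Nat.gcd w1 w2) g3 hd h12 hg3d
  -- u_i * w_i = d * v_i
  have key : ∀ w g : ℕ, g ∣ d → g ∣ w → d / g * w = d * (w / g) := by
    intro w g hgd hgw
    rw [mul_comm (d / g) w, ← Nat.mul_div_assoc w hgd, ← Nat.mul_div_assoc d hgw, mul_comm w d]
  have h1 : u1 * w1 = d * v1 := by rw [hu1, hv1]; exact key w1 g1 hg1d hg1w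
  have h2 : u2 * w2 = d * v2 := by rw [hu2, hv2]; exact key w2 g2 hg2d hg2w
  have h3 : u3 * w3 = d * v3 := by rw [hu3, hv3]; exact key w3 g3 hg3d hg3w
  have main : u1 * u2 * u3 * (w1 * w2 * w3)
      = d ^ 2 * Nat.gcd (Nat.gcd w1 w2) w3 * (v1 * v2 * v3) * Nat.lcm (Nat.lcm u1 u2) u3 := by
    calc u1 * u2 * u3 * (w1 * w2 * w3) = (u1 * w1) * ((u2 * w2) * (u3 * w3)) := by ring
      _ = (d * v1) * ((d * v2) * (d * v3)) := by rw [h1, h2, h3]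
      _ = (Nat.lcm (Nat.lcm u1 u2) u3 * Nat.gcd (Nat.gcd w1 w2) w3)
            * d ^ 2 * (v1 * v2 * v3) := by rw [hLG]; ring
      _ = d ^ 2 * Nat.gcd (Nat.gcd w1 w2) w3 * (v1 * v2 * v3)
            * Nat.lcm (Nat.lcm u1 u2) u3 := by ring
  refine ⟨?_, main⟩
  -- positivity facts
  have hv1p : 0 < v1 := by rw [hv1]; exact Nat.div_pos (Nat.le_of_dvd hw1 hg1w) (Nat.gcd_pos_of_pos_left w1 hd)
  have hv2p : 0 < v2 := by rw [hv2]; exact Nat.div_pos (Nat.le_of_dvd hw2 hg2w) (Nat.gcd_pos_of_pos_left w2 hd)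
  have hv3p : 0 < v3 := by rw [hv3]; exact Nat.div_pos (Nat.le_of_dvd hw3 hg3w) (Nat.gcd_pos_of_pos_left w3 hd)
  have hu1p : 0 < u1 := by rw [hu1]; exact Nat.div_pos (Nat.le_of_dvd hd hg1d) (Nat.gcd_pos_of_pos_left w1 hd)
  have hu2p : 0 < u2 := by rw [hu2]; exact Nat.div_pos (Nat.le_of_dvd hd hg2d) (Nat.gcd_pos_of_pos_left w2 hd)
  have hu3p : 0 < u3 := by rw [hu3]; exact Nat.div_pos (Nat.le_of_dvd hd hg3d) (Nat.gcd_pos_of_pos_left w3 hd)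
  have hLp : 0 < Nat.lcm (Nat.lcm u1 u2) u3 := Nat.lcm_pos (Nat.lcm_pos hu1p hu2p) hu3p
  have hden1 : ((v1 : ℚ) * v2 * v3 * Nat.lcm (Nat.lcm u1 u2) u3) ≠ 0 := by
    have : (0:ℚ) < (v1 : ℚ) * v2 * v3 * Nat.lcm (Nat.lcm u1 u2) u3 := by
      have := hv1p; have := hv2p; have := hv3p; have := hLp; positivity
    exact this.ne'
  have hden2 : ((w1 : ℚ) * w2 * w3) ≠ 0 := by positivity
  rw [div_eq_div_iff hden1 hden2]
  have := congrArg (Nat.cast : ℕ → ℚ) main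
  push_cast at this
  linear_combination this
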